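/- Given any fixed backward policy P_B on a finite DAG with reward R (with Z > 0), there exists a unique forward policy P_F satisfying the trajectory balance constraint with P_B, provided every state lies on at least one complete trajectory with positive backward probability. -/

import Mathlib

open scoped BigOperators Classical

noncomputable section

def pairProd {S : Type*} (f : S → S → ℝ) : List S → ℝ
  | [] => 1
  | [_] => 1
  | a :: b :: l => f a b * pairProd f (b :: l)

lemma pairProd_nonneg {S : Type*} (f : S → S → ℝ) (h : ∀ a b, 0 ≤ f a b) :
    ∀ l : List S, 0 ≤ pairProd f l
  | [] => by simp [pairProd]
  | [a] => by simp [pairProd]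
  | a :: b :: l => by
      simpa [pairProd] using mul_nonneg (h a b) (pairProd_nonneg f h (b :: l))

lemma pairProd_append {S : Type*} (f : S → S → ℝ) :
    ∀ (l1 : List S) (a : S) (l2 : List S),
      pairProd f (l1 ++ a :: l2) = pairProd f (l1 ++ [a]) * pairProd f (a :: l2)
  | [], a, l2 => by simp [pairProd]
  | [b], a, l2 => by simp [pairProd]
  | b :: c :: l1, a, l2 => by
      have ih := pairProd_append f (c :: l1) a l2
      simp only [List.cons_append, pairProd] at *
      rw [ih]; ring

lemma pairProd_congr {S : Type*} (f g : S → S → ℝ) :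
    ∀ l : List S, (∀ a ∈ l, ∀ b, f a b = g a b) → pairProd f l = pairProd g l
  | [], _ => rfl
  | [a], _ => rfl
  | a :: b :: l, h => by
      simp only [pairProd]
      rw [h a (by simp), pairProd_congr f g (b :: l) (fun p hp q => h p (by simp [hp]) q)]

def flowAux {S : Type*} [Fintype S] (term : S → Prop) (R : S → ℝ) (PB : S → S → ℝ) :
    ℕ → S → ℝ
  | 0, s => if term s then R s else 0
  | (n+1), s => if term s then R s else ∑ s' : S, PB s' s * flowAux term R PB n s'

lemma flowAux_term {S : Type*} [Fintype S] (term : S → Prop) (R : S → ℝ) (PB : S → S → ℝ)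
    (n : ℕ) (s : S) (hs : term s) : flowAux term R PB n s = R s := by
  cases n <;> simp [flowAux, hs]

def IsForwardPolicy {S : Type*} [Fintype S] (E : S → S → Prop) (term : S → Prop)
    (PF : S → S → ℝ) : Prop :=
  (∀ s s', 0 ≤ PF s s') ∧ (∀ s s', PF s s' ≠ 0 → E s s') ∧
    (∀ s, ¬ term s → ∑ s' : S, PF s s' = 1)

def IsBackwardPolicy {S : Type*} [Fintype S] (E : S → S → Prop) (s0 : S)
    (PB : S → S → ℝ) : Prop :=
  (∀ s' s, 0 ≤ PB s' s) ∧ (∀ s' s, PB s' s ≠ 0 → E s s') ∧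
    (∀ s', s' ≠ s0 → ∑ s : S, PB s' s = 1)

/-- Given a fixed backward policy `PB`, if every state lies on at least one complete
trajectory with positive backward probability, then there is a unique forward policy
satisfying the trajectory balance constraint with `PB`. -/
theorem existsUnique_forward_of_backward
    {S : Type*} [Fintype S] [DecidableEq S]
    (E : S → S → Prop) (s0 : S) (term : S → Prop)
    (hterm : ∀ s, term s ↔ ∀ s', ¬ E s s')
    (hinit : ∀ s, ¬ E s s0)
    (hreach : ∀ s, Relation.ReflTransGen E s0 s)
    (rank : S → ℕ) (hrank : ∀ s s', E s s' → rank s < rank s')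
    (T : Finset (List S))
    (hT : ∀ l, l ∈ T ↔
      (l.head? = some s0 ∧ l.Chain' E ∧ ∃ x, l.getLast? = some x ∧ term x))
    (R : S → ℝ) (hR : ∀ x, term x → 0 < R x)
    (Z : ℝ) (hZ : Z = ∑ x ∈ Finset.univ.filter term, R x) (hZpos : 0 < Z)
    (PB : S → S → ℝ) (hPB : IsBackwardPolicy E s0 PB)
    (hpos : ∀ s : S, ∃ l ∈ T, s ∈ l ∧ 0 < pairProd (fun a b => PB b a) l) :
    ∃! PF : S → S → ℝ, IsForwardPolicy E term PF ∧
      ∀ l ∈ T, ∀ x, l.getLast? = some x →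
        pairProd PF l = R x / Z * pairProd (fun a b => PB b a) l := by
  classical
  obtain ⟨hPB0, hPBE, hPBsum⟩ := hPB
  set N := Finset.univ.sup rank with hN
  have hrankle : ∀ s : S, rank s ≤ N := fun s => Finset.le_sup (Finset.mem_univ s)
  have hchild : ∀ s, ¬ term s → ∃ s', E s s' := by
    intro s hs; by_contra h; push_neg at h; exact hs ((hterm s).mpr h)
  set w : S → ℝ := flowAux term R PB N with hw
  -- stability
  have hstab : ∀ n (s : S), N ≤ rank s + n →
      flowAux term R PB (n+1) s = flowAux term R PB n s := by
    intro n
    induction n with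
    | zero =>
      intro s h
      by_cases hts : term s
      · simp [flowAux, hts]
      · exfalso
        obtain ⟨t, ht⟩ := hchild s hts
        have h1 := hrank s t ht
        have h2 := hrankle t
        omega
    | succ n ih =>
      intro s h
      by_cases hts : term s
      · simp [flowAux, hts]
      · rw [show flowAux term R PB (n+1+1) s = ∑ t : S, PB t s * flowAux term R PB (n+1) t
              from by simp [flowAux, hts],
            show flowAux term R PB (n+1) s = ∑ t : S, PB t s * flowAux term R PB n t
              from by simp [flowAux, hts]]
        refine Finset.sum_congr rfl (fun t _ => ?_)
        by_cases h0 : PB t s = 0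
        · simp [h0]
        · have hE := hPBE t s h0
          have h1 := hrank s t hE
          rw [ih t (by omega)]
  have hwterm : ∀ s, term s → w s = R s := fun s hs => flowAux_term term R PB N s hs
  have hwrec : ∀ s, ¬ term s → w s = ∑ s' : S, PB s' s * w s' := by
    intro s hs
    have := hstab N s (by omega)
    rw [hw, ← this]
    simp [flowAux, hs]
  have hwnonneg : ∀ s, 0 ≤ w s := by
    have : ∀ n (s : S), 0 ≤ flowAux term R PB n s := by
      intro n
      induction n with
      | zero =>
        intro s; by_cases hts : term s
        · simp [flowAux, hts, (hR s hts).le]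
        · simp [flowAux, hts]
      | succ n ih =>
        intro s; by_cases hts : term s
        · simp [flowAux, hts, (hR s hts).le]
        · simp only [flowAux, if_neg hts]
          exact Finset.sum_nonneg fun t _ => mul_nonneg (hPB0 t s) (ih t)
    exact fun s => this N s
  -- positivity along positive chains
  have hsufpos : ∀ (l : List S) (a : S), List.Chain' E (a :: l) →
      term ((a :: l).getLast (by simp)) →
      0 < pairProd (fun p q => PB q p) (a :: l) → 0 < w a := by
    intro l
    induction l with
    | nil =>
      intro a _ hterma _
      simp only [List.getLast_singleton] at hterma
      rw [hwterm a hterma]; exact hR a hterma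
    | cons b l ih =>
      intro a hchain hlast hpp
      have hEab : E a b := (List.isChain_cons_cons.mp hchain).1
      have hnta : ¬ term a := fun h => (hterm a).mp h b hEab
      have hpp' : pairProd (fun p q => PB q p) (a :: b :: l)
          = PB b a * pairProd (fun p q => PB q p) (b :: l) := rfl
      have h1 : 0 ≤ PB b a := hPB0 b a
      have h2 : 0 ≤ pairProd (fun p q => PB q p) (b :: l) :=
        pairProd_nonneg _ (fun p q => hPB0 q p) _
      rw [hpp'] at hpp
      have hba : 0 < PB b a := by
        rcases eq_or_lt_of_le h1 with h | h
        · rw [← h] at hpp; simp at hpp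
        · exact h
      have hrest : 0 < pairProd (fun p q => PB q p) (b :: l) := by nlinarith
      have hwb : 0 < w b := by
        refine ih b (List.isChain_cons_cons.mp hchain).2 ?_ hrest
        exact hlast
      have : PB b a * w b ≤ ∑ s' : S, PB s' a * w s' :=
        Finset.single_le_sum (fun t _ => mul_nonneg (hPB0 t a) (hwnonneg t))
          (Finset.mem_univ b)
      rw [hwrec a hnta]
      nlinarith
  have hwpos : ∀ s, 0 < w s := by
    intro s
    obtain ⟨l, hlT, hsl, hlpos⟩ := hpos s
    obtain ⟨l1, l2, rfl⟩ := List.append_of_mem hsl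
    obtain ⟨hhead, hchain, x, hlastx, htx⟩ := (hT _).mp hlT
    have hchain2 : List.Chain' E (s :: l2) := (List.isChain_append.mp hchain).2.1
    have hlast2 : (l1 ++ s :: l2).getLast? = (s :: l2).getLast? := by
      rw [List.getLast?_append, List.getLast?_eq_getLast (l := s :: l2) (by simp)]; rfl
    have hterml : term ((s :: l2).getLast (by simp)) := by
      have : (s :: l2).getLast? = some x := by rw [← hlast2]; exact hlastx
      rw [List.getLast?_eq_getLast (l := s :: l2) (by simp)] at this
      simpa [Option.some_inj.mp this] using htx
    have hsplit := pairProd_append (fun p q => PB q p) l1 s l2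
    have hn1 : 0 ≤ pairProd (fun p q => PB q p) (l1 ++ [s]) :=
      pairProd_nonneg _ (fun p q => hPB0 q p) _
    have hn2 : 0 ≤ pairProd (fun p q => PB q p) (s :: l2) :=
      pairProd_nonneg _ (fun p q => hPB0 q p) _
    rw [hsplit] at hlpos
    have : 0 < pairProd (fun p q => PB q p) (s :: l2) := by nlinarith
    exact hsufpos l2 s hchain2 hterml this
  -- w s0 = Z
  have hws0 : w s0 = Z := by
    by_cases hts0 : term s0
    · have hall : ∀ s : S, s = s0 := by
        intro s
        have h := hreach s
        induction h with
        | refl => rfl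
        | tail h1 h2 ih =>
          rw [ih] at h2
          exact absurd h2 ((hterm s0).mp hts0 _)
      have huniv : (Finset.univ : Finset S) = {s0} := by
        ext y; simp [hall y]
      rw [hwterm s0 hts0, hZ, huniv, Finset.filter_singleton, if_pos hts0,
        Finset.sum_singleton]
    · have hcalc1 : ∑ s : S, ∑ s' : S, PB s' s * w s'
          = ∑ s ∈ Finset.univ.filter (fun s => ¬ term s), w s := by
        rw [← Finset.sum_filter_add_sum_filter_not Finset.univ term
          (fun s => ∑ s' : S, PB s' s * w s')]
        have hz : ∑ s ∈ Finset.univ.filter term, (∑ s' : S, PB s' s * w s') = 0 := by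
          refine Finset.sum_eq_zero fun s hs => Finset.sum_eq_zero fun t _ => ?_
          have hts : term s := (Finset.mem_filter.mp hs).2
          have h0 : PB t s = 0 := by
            by_contra h0; exact (hterm s).mp hts t (hPBE t s h0)
          simp [h0]
        rw [hz, zero_add]
        exact Finset.sum_congr rfl fun s hs => (hwrec s (Finset.mem_filter.mp hs).2).symm
      have hcalc2 : ∑ s : S, ∑ s' : S, PB s' s * w s'
          = ∑ s' ∈ Finset.univ.erase s0, w s' := by
        rw [Finset.sum_comm]
        have hpt : ∀ s' : S, ∑ s : S, PB s' s * w s' = (if s' = s0 then 0 else w s') := by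
          intro s'
          by_cases h : s' = s0
          · rw [if_pos h]
            refine Finset.sum_eq_zero fun t _ => ?_
            have h0 : PB s' t = 0 := by
              by_contra h0
              have := hPBE s' t h0
              rw [h] at this
              exact hinit t this
            simp [h0]
          · rw [if_neg h, ← Finset.sum_mul, hPBsum s' h, one_mul]
        calc ∑ s' : S, ∑ s : S, PB s' s * w s'
            = ∑ s' : S, (if s' = s0 then 0 else w s') :=
              Finset.sum_congr rfl (fun s' _ => hpt s')
          _ = ∑ s' : S, (if s' ≠ s0 then w s' else 0) :=
              Finset.sum_congr rfl (fun s' _ => by by_cases h : s' = s0 <;> simp [h])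
          _ = ∑ s' ∈ Finset.univ.filter (fun s' => s' ≠ s0), w s' :=
              (Finset.sum_filter _ _).symm
          _ = ∑ s' ∈ Finset.univ.erase s0, w s' := by rw [Finset.filter_ne']
      have h1 := Finset.sum_filter_add_sum_filter_not (Finset.univ : Finset S) term w
      have h2 := Finset.sum_erase_add (Finset.univ : Finset S) w (Finset.mem_univ s0)
      have h3 : ∑ s ∈ Finset.univ.filter term, w s = Z := by
        rw [hZ]
        exact Finset.sum_congr rfl fun s hs => hwterm s (Finset.mem_filter.mp hs).2
      have e12 : ∑ s ∈ Finset.univ.filter (fun s => ¬ term s), w s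
          = ∑ s' ∈ Finset.univ.erase s0, w s' := by rw [← hcalc1, hcalc2]
      linarith
  -- the forward policy
  set PF : S → S → ℝ := fun s s' => if term s then 0 else PB s' s * w s' / w s with hPF
  have hPFval : ∀ s s', ¬ term s → PF s s' = PB s' s * w s' / w s := by
    intro s s' hs; simp [hPF, hs]
  -- telescoping
  have tele : ∀ (l : List S) (a : S), List.Chain' E (a :: l) →
      pairProd PF (a :: l) * w a
        = pairProd (fun p q => PB q p) (a :: l) * w ((a :: l).getLast (by simp)) := by
    intro l
    induction l with
    | nil => intro a _; simp [pairProd]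
    | cons b l ih =>
      intro a hchain
      have hEab : E a b := (List.isChain_cons_cons.mp hchain).1
      have hnta : ¬ term a := fun h => (hterm a).mp h b hEab
      have h1 : pairProd PF (a :: b :: l) = PF a b * pairProd PF (b :: l) := rfl
      have h2 : pairProd (fun p q => PB q p) (a :: b :: l)
          = PB b a * pairProd (fun p q => PB q p) (b :: l) := rfl
      have h3 := ih b (List.isChain_cons_cons.mp hchain).2
      have hgl : ((a :: b :: l).getLast (by simp)) = ((b :: l).getLast (by simp)) := rfl
      have hwa : w a ≠ 0 := (hwpos a).ne'
      have hab : PF a b * w a = PB b a * w b := by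
        rw [hPFval a b hnta]; field_simp
      rw [h1, h2, hgl]
      calc PF a b * pairProd PF (b :: l) * w a
          = (PF a b * w a) * pairProd PF (b :: l) := by ring
        _ = PB b a * (pairProd PF (b :: l) * w b) := by rw [hab]; ring
        _ = PB b a * (pairProd (fun p q => PB q p) (b :: l)
              * w ((b :: l).getLast (by simp))) := by rw [h3]
        _ = PB b a * pairProd (fun p q => PB q p) (b :: l)
              * w ((b :: l).getLast (by simp)) := by ring
  -- forward policy properties
  have hpf1 : ∀ s s', 0 ≤ PF s s' := by
    intro s s'
    by_cases hts : term s
    · simp [hPF, hts]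
    · rw [hPFval s s' hts]
      exact div_nonneg (mul_nonneg (hPB0 s' s) (hwnonneg s')) (hwnonneg s)
  have hpf2 : ∀ s s', PF s s' ≠ 0 → E s s' := by
    intro s s' h
    by_cases hts : term s
    · exact absurd (by simp [hPF, hts]) h
    · rw [hPFval s s' hts] at h
      refine hPBE s' s fun h0 => h ?_
      rw [h0]; ring
  have hpf3 : ∀ s, ¬ term s → ∑ s' : S, PF s s' = 1 := by
    intro s hs
    rw [Finset.sum_congr rfl (fun s' _ => hPFval s s' hs), ← Finset.sum_div,
      ← hwrec s hs, div_self (hwpos s).ne']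
  have hTBPF : ∀ l ∈ T, ∀ x, l.getLast? = some x →
      pairProd PF l = R x / Z * pairProd (fun a b => PB b a) l := by
    intro l hlT x hx
    obtain ⟨hhead, hchain, x', hx', htx'⟩ := (hT l).mp hlT
    have hxx : x' = x := by rw [hx] at hx'; exact (Option.some_inj.mp hx').symm
    rw [hxx] at htx'
    obtain ⟨l', rfl⟩ : ∃ l', l = s0 :: l' := by
      cases l with
      | nil => simp at hhead
      | cons a l' =>
        have ha : a = s0 := by simpa using hhead
        exact ⟨l', by rw [ha]⟩
    have htele := tele l' s0 hchain
    have hgl : (s0 :: l').getLast (by simp) = x := by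
      have h := List.getLast?_eq_getLast (l := s0 :: l') (by simp)
      rw [hx] at h
      exact (Option.some_inj.mp h).symm
    rw [hgl, hwterm x htx', hws0] at htele
    rw [eq_comm, div_mul_eq_mul_div, div_eq_iff hZpos.ne', eq_comm]
    linarith [htele]
  -- rank along chains
  have chainRank : ∀ (m : List S) (b : S), List.Chain' E (b :: m) →
      ∀ p ∈ b :: m, rank b ≤ rank p := by
    intro m
    induction m with
    | nil =>
      intro b _ p hp
      rcases List.mem_singleton.mp hp with rfl
      exact le_refl _
    | cons c m ih =>
      intro b hch p hp
      rcases List.mem_cons.mp hp with rfl | hp'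
      · exact le_refl _
      · have h1 : E b c := (List.isChain_cons_cons.mp hch).1
        have h2 := ih c (List.isChain_cons_cons.mp hch).2 p hp'
        have h3 := hrank b c h1
        omega
  -- positive suffix extraction
  have hsuffix : ∀ b : S, ∃ m : List S, m.head? = some b ∧ List.Chain' E m ∧
      (∃ xb, m.getLast? = some xb ∧ term xb) ∧
      0 < pairProd (fun p q => PB q p) m := by
    intro b
    obtain ⟨l, hlT, hbl, hlpos⟩ := hpos b
    obtain ⟨l1, l2, rfl⟩ := List.append_of_mem hbl
    obtain ⟨hhead, hchain, x, hlastx, htx⟩ := (hT _).mp hlT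
    refine ⟨b :: l2, rfl, (List.isChain_append.mp hchain).2.1, ⟨x, ?_, htx⟩, ?_⟩
    · have hy := List.getLast?_eq_getLast (l := b :: l2) (by simp)
      rw [List.getLast?_append, hy] at hlastx
      rw [hy]
      exact hlastx
    · have hsplit := pairProd_append (fun p q => PB q p) l1 b l2
      have hn1 : 0 ≤ pairProd (fun p q => PB q p) (l1 ++ [b]) :=
        pairProd_nonneg _ (fun p q => hPB0 q p) _
      have hn2 : 0 ≤ pairProd (fun p q => PB q p) (b :: l2) :=
        pairProd_nonneg _ (fun p q => hPB0 q p) _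
      rw [hsplit] at hlpos
      nlinarith
  -- uniqueness
  refine ⟨PF, ⟨⟨hpf1, hpf2, hpf3⟩, hTBPF⟩, ?_⟩
  rintro PF' ⟨⟨h'0, h'E, h'sum⟩, hTB'⟩
  have h'zero : ∀ s b, ¬ E s b → PF' s b = 0 := by
    intro s b h; by_contra h0; exact h (h'E s b h0)
  have hPFterm : ∀ s b, term s → PF' s b = PF s b := by
    intro s b hts
    rw [h'zero s b (fun hE => (hterm s).mp hts b hE)]
    simp [hPF, hts]
  have main : ∀ n (s : S), N - rank s ≤ n → ∀ b, PF' s b = PF s b := by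
    intro n
    induction n with
    | zero =>
      intro s hle b
      have hts : term s := by
        by_contra hts
        obtain ⟨t, ht⟩ := hchild s hts
        have h1 := hrank s t ht
        have h2 := hrankle t
        omega
      exact hPFterm s b hts
    | succ n ih =>
      intro s hle b
      by_cases hts : term s
      · exact hPFterm s b hts
      · have ihs : ∀ t, rank s < rank t → ∀ b', PF' t b' = PF t b' := by
          intro t ht b'
          refine ih t ?_ b'
          have := hrankle t
          omega
        obtain ⟨l, hlT, hsl, hlpos⟩ := hpos s
        obtain ⟨l1, l2, rfl⟩ := List.append_of_mem hsl
        obtain ⟨hhead, hchain, x, hlastx, htx⟩ := (hT _).mp hlT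
        set c := l1 ++ [s] with hc
        have hceq : l1 ++ s :: l2 = c ++ l2 := by simp [hc]
        have hchainc : List.Chain' E c := by
          rw [hceq] at hchain
          exact (List.isChain_append.mp hchain).1
        have hclast : c.getLast? = some s := List.getLast?_concat
        have hchead : c.head? = some s0 := by
          rw [hc, List.head?_append]
          rw [List.head?_append] at hhead
          exact hhead
        have hsplitPB := pairProd_append (fun p q => PB q p) l1 s l2
        have hn1 : 0 ≤ pairProd (fun p q => PB q p) c :=
          pairProd_nonneg _ (fun p q => hPB0 q p) _
        have hn2 : 0 ≤ pairProd (fun p q => PB q p) (s :: l2) :=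
          pairProd_nonneg _ (fun p q => hPB0 q p) _
        rw [← hc] at hsplitPB
        rw [hsplitPB] at hlpos
        have hcpos : 0 < pairProd (fun p q => PB q p) c := by nlinarith
        have hTBl := hTB' _ hlT x hlastx
        have hsplitPF' := pairProd_append PF' l1 s l2
        rw [← hc] at hsplitPF'
        have hcne : pairProd PF' c ≠ 0 := by
          intro h0
          rw [hsplitPF', h0, zero_mul] at hTBl
          have hgt : 0 < R x / Z * pairProd (fun a b => PB b a) (l1 ++ s :: l2) := by
            refine mul_pos (div_pos (hR x htx) hZpos) ?_
            rw [hsplitPB]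
            nlinarith
          rw [← hTBl] at hgt
          exact lt_irrefl 0 hgt
        have hKb : ∀ b', E s b' → PF' s b' * (Z * pairProd PF' c)
            = pairProd (fun p q => PB q p) c * (PB b' s * w b') := by
          intro b' hEb
          obtain ⟨m, hmhead, hmchain, ⟨xb, hmlast, htxb⟩, hmpos⟩ := hsuffix b'
          obtain ⟨m2, rfl⟩ : ∃ m2, m = b' :: m2 := by
            cases m with
            | nil => simp at hmhead
            | cons hd tl =>
              have hh : hd = b' := by simpa using hmhead
              exact ⟨tl, by rw [hh]⟩
          have hτchain : List.Chain' E (c ++ b' :: m2) := by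
            refine List.isChain_append.mpr ⟨hchainc, hmchain, ?_⟩
            intro p hp q hq
            rw [hclast] at hp
            simp only [Option.mem_def, Option.some_inj] at hp
            simp only [List.head?_cons, Option.mem_def, Option.some_inj] at hq
            rw [hp, hq] at hEb
            exact hEb
          have hτlast : (c ++ b' :: m2).getLast? = some xb := by
            rw [List.getLast?_append, hmlast]
            rfl
          have hτT : c ++ b' :: m2 ∈ T := by
            refine (hT _).mpr ⟨?_, hτchain, xb, hτlast, htxb⟩
            rw [List.head?_append, hchead]
            rfl
          have hTBτ := hTB' _ hτT xb hτlast
          have hdecomp : c ++ b' :: m2 = l1 ++ s :: (b' :: m2) := by simp [hc]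
          have hPF'dec : pairProd PF' (c ++ b' :: m2)
              = pairProd PF' c * (PF' s b' * pairProd PF' (b' :: m2)) := by
            rw [hdecomp, pairProd_append PF' l1 s (b' :: m2), ← hc]
            rfl
          have hPBdec : pairProd (fun p q => PB q p) (c ++ b' :: m2)
              = pairProd (fun p q => PB q p) c
                * (PB b' s * pairProd (fun p q => PB q p) (b' :: m2)) := by
            rw [hdecomp, pairProd_append (fun p q => PB q p) l1 s (b' :: m2), ← hc]
            rfl
          have hm' : pairProd PF' (b' :: m2) = pairProd PF (b' :: m2) := by
            refine pairProd_congr _ _ _ (fun p hp q => ?_)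
            exact ihs p (lt_of_lt_of_le (hrank s b' hEb) (chainRank m2 b' hmchain p hp)) q
          have htele := tele m2 b' hmchain
          have hglm : (b' :: m2).getLast (by simp) = xb := by
            have h := List.getLast?_eq_getLast (l := b' :: m2) (by simp)
            rw [hmlast] at h
            exact (Option.some_inj.mp h).symm
          rw [hglm, hwterm xb htxb] at htele
          have hwb : w b' ≠ 0 := (hwpos b').ne'
          have hPF'm : pairProd PF' (b' :: m2)
              = pairProd (fun p q => PB q p) (b' :: m2) * R xb / w b' := by
            rw [hm', eq_div_iff hwb]
            exact htele
          rw [hPF'dec, hPBdec, hPF'm] at hTBτ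
          have hMR : pairProd (fun p q => PB q p) (b' :: m2) * R xb ≠ 0 :=
            (mul_pos hmpos (hR xb htxb)).ne'
          field_simp at hTBτ
          refine mul_right_cancel₀ hMR ?_
          linear_combination pairProd (fun p q => PB q p) (b' :: m2) * hTBτ
        have hKb' : ∀ b', PF' s b' * (Z * pairProd PF' c)
            = pairProd (fun p q => PB q p) c * (PB b' s * w b') := by
          intro b'
          by_cases hEb : E s b'
          · exact hKb b' hEb
          · rw [h'zero s b' hEb, zero_mul]
            have h0 : PB b' s = 0 := by
              by_contra h0; exact hEb (hPBE b' s h0)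
            rw [h0]
            ring
        have hsum1 : ∑ b' : S, PF' s b' * (Z * pairProd PF' c)
            = Z * pairProd PF' c := by
          rw [← Finset.sum_mul, h'sum s hts, one_mul]
        have hsum2 : ∑ b' : S, pairProd (fun p q => PB q p) c * (PB b' s * w b')
            = pairProd (fun p q => PB q p) c * w s := by
          rw [← Finset.mul_sum, ← hwrec s hts]
        have hKey : Z * pairProd PF' c = pairProd (fun p q => PB q p) c * w s := by
          rw [← hsum1, Finset.sum_congr rfl (fun b' _ => hKb' b'), hsum2]
        have hb := hKb' b
        rw [hKey] at hb
        rw [hPFval s b hts]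
        have hws : w s ≠ 0 := (hwpos s).ne'
        rw [eq_div_iff hws]
        refine mul_right_cancel₀ hcpos.ne' ?_
        linear_combination hb
  exact funext fun s => funext fun b => main (N - rank s) s le_rfl b
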